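/- arXiv:1608.01765 — 2 statements merged into one kernel-verified Lean document; each statement's English description precedes it below -/
import Mathlib

section
/- Let p be an odd prime, n a positive integer, and i, h nonnegative integers. In the ring of formal power series ℚ⟦q⟧ one has Π_{M≥1} (1−q^M)^{n(i+2h)} · (1−q^{4M})^{n(2i+h)} · (1−q^{pM})^{n(i+2h)} · (1−q^{4pM})^{n(2i+h)} = (Π_{M≥1} (1−q^{2M})^{3n(i+h)} · (1−q^{2pM})^{3n(i+h)}) · (Σ_{l≥0} b_l(i+2h, i) · q^l). (This is the power-series content of Lemma 1: X^i Y^h = 2^{ni} q^{mi} Σ_{l≥0} b_l(i+2h, i) q^l.) -/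
open Finset

/-- σ₁, the sum-of-divisors function. -/
def sigma1 (k : ℕ) : ℕ := ∑ d ∈ k.divisors, d

/-- The term σ₁(k/d)/(k/d), taken to be 0 unless d divides k. -/
noncomputable def sigmaTerm (k d : ℕ) : ℚ :=
  if d ∣ k then (sigma1 (k / d) : ℚ) / (k / d) else 0

/-- α_p(k) = σ₁(k)/k − 3σ₁(k/2)/(k/2) + 2σ₁(k/4)/(k/4) + σ₁(k/p)/(k/p)
      − 3σ₁(k/(2p))/(k/(2p)) + 2σ₁(k/(4p))/(k/(4p)). -/
noncomputable def alphaP (p k : ℕ) : ℚ :=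
  sigmaTerm k 1 - 3 * sigmaTerm k 2 + 2 * sigmaTerm k 4
    + sigmaTerm k p - 3 * sigmaTerm k (2 * p) + 2 * sigmaTerm k (4 * p)

/-- The multiplicity j_k of the part k in the partition J. -/
def mult {N : ℕ} (J : N.Partition) (k : ℕ) : ℕ := Multiset.count k J.parts

/-- |J| = Σ_k j_k. -/
def normJ {N : ℕ} (J : N.Partition) : ℕ := Multiset.card J.parts

/-- J_o = Σ_{k odd} j_k. -/
def oddJ {N : ℕ} (J : N.Partition) : ℕ := Multiset.card (J.parts.filter Odd)

/-- J_e = Σ_{k even} j_k. -/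
def evenJ {N : ℕ} (J : N.Partition) : ℕ := Multiset.card (J.parts.filter Even)

/-- W_p(J) = Π_{k≥1} α_p(k)^{j_k}/j_k!  (the factors with j_k = 0 are 1). -/
noncomputable def Wp (p : ℕ) {N : ℕ} (J : N.Partition) : ℚ :=
  ∏ k ∈ J.parts.toFinset, alphaP p k ^ mult J k / (Nat.factorial (mult J k))

/-- b_l(u,v) = Σ_{J ∈ J[l]} (−n)^{|J|} u^{J_o} v^{J_e} W_p(J). -/
noncomputable def bP (p n l : ℕ) (u v : ℚ) : ℚ :=
  ∑ J : l.Partition, (-(n : ℚ)) ^ normJ J * u ^ oddJ J * v ^ evenJ J * Wp p J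

/-- The infinite product Π_{M≥1} f(M) of formal power series. Each factor below is
of the form f(M) = 1 + O(q^M), so for each fixed coefficient the finite partial
products stabilize: the coefficient of q^d of the infinite product is the
coefficient of q^d of Π_{M=1}^{d} f(M). -/
noncomputable def infProd (f : ℕ → PowerSeries ℚ) : PowerSeries ℚ :=
  PowerSeries.mk fun d => PowerSeries.coeff d (∏ M ∈ Finset.Icc 1 d, f M)

open PowerSeries

lemma sigma1_mul_coprime {x y : ℕ} (hc : Nat.Coprime x y) :
    sigma1 (x * y) = sigma1 x * sigma1 y := Nat.Coprime.sum_divisors_mul hc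

lemma geom_two (a : ℕ) : ∑ x ∈ Finset.range (a+1), 2^x = 2^(a+1) - 1 := by
  induction a with
  | zero => rfl
  | succ b ih =>
    rw [Finset.sum_range_succ, ih]
    have h1 : 1 ≤ 2^(b+1) := Nat.one_le_two_pow
    have h2 : 2^(b+1+1) = 2^(b+1) * 2 := pow_succ 2 (b+1)
    omega

lemma sigma1_two_pow (a : ℕ) : sigma1 (2 ^ a) = 2 ^ (a+1) - 1 := by
  unfold sigma1
  rw [Nat.sum_divisors_prime_pow Nat.prime_two]
  exact geom_two a

lemma sigma1_even_key {m : ℕ} (hm0 : 0 < m) (hm2 : 2 ∣ m) :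
    sigma1 m + 2 * (if 4 ∣ m then sigma1 (m / 4) else 0) = 3 * sigma1 (m / 2) := by
  obtain ⟨a, w, hw, rfl⟩ := Nat.exists_eq_two_pow_mul_odd hm0.ne'
  have hw2 : ¬ 2 ∣ w := by
    intro hdvd; exact (Nat.not_odd_iff_even.mpr ⟨w/2, by omega⟩) hw
  have hcop : ∀ b : ℕ, Nat.Coprime (2^b) w :=
    fun b => Nat.Coprime.pow_left b ((Nat.prime_two.coprime_iff_not_dvd).mpr hw2)
  match a with
  | 0 => simp only [pow_zero, one_mul] at hm2; exact absurd hm2 hw2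
  | 1 =>
    have h4 : ¬ 4 ∣ 2^1 * w := by
      rintro ⟨c, hc⟩
      exact hw2 ⟨2*c, by omega⟩
    have hdiv : 2^1 * w / 2 = w := by
      rw [pow_one, Nat.mul_div_cancel_left w (by norm_num)]
    rw [if_neg h4, hdiv, sigma1_mul_coprime (hcop 1), sigma1_two_pow]
    norm_num
  | (b+2) =>
    have h4 : 4 ∣ 2^(b+2) * w := ⟨2^b * w, by ring⟩
    have hd2 : 2^(b+2) * w / 2 = 2^(b+1) * w := by
      rw [show 2^(b+2) * w = 2 * (2^(b+1)*w) by ring, Nat.mul_div_cancel_left _ (by norm_num)]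
    have hd4 : 2^(b+2) * w / 4 = 2^b * w := by
      rw [show 2^(b+2) * w = 4 * (2^b*w) by ring, Nat.mul_div_cancel_left _ (by norm_num)]
    rw [if_pos h4, hd2, hd4, sigma1_mul_coprime (hcop (b+2)),
      sigma1_mul_coprime (hcop (b+1)), sigma1_mul_coprime (hcop b),
      sigma1_two_pow, sigma1_two_pow, sigma1_two_pow]
    have e1 : (2:ℕ)^(b+2+1) = 8 * 2^b := by ring
    have e2 : (2:ℕ)^(b+1+1) = 4 * 2^b := by ring
    have e3 : (2:ℕ)^(b+1) = 2 * 2^b := by ring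
    have e4 : 1 ≤ (2:ℕ)^b := Nat.one_le_two_pow
    rw [e1, e2, e3]
    zify [show (1:ℕ) ≤ 8 * 2^b by omega, show (1:ℕ) ≤ 4 * 2^b by omega,
      show (1:ℕ) ≤ 2 * 2^b by omega]
    ring

lemma filter_dvd_Icc_eq_divisors {m N : ℕ} (hm : 1 ≤ m) (hmN : m ≤ N) :
    (Finset.Icc 1 N).filter (· ∣ m) = m.divisors := by
  ext d
  simp only [Finset.mem_filter, Finset.mem_Icc, Nat.mem_divisors]
  constructor
  · rintro ⟨⟨h1, h2⟩, h3⟩; exact ⟨h3, by omega⟩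
  · rintro ⟨h1, h2⟩
    exact ⟨⟨Nat.pos_of_dvd_of_pos h1 hm, le_trans (Nat.le_of_dvd hm h1) hmN⟩, h1⟩

noncomputable def lam (a : ℕ) : PowerSeries ℚ :=
  PowerSeries.mk fun j => if a ∣ j ∧ j ≠ 0 then -(a:ℚ) else 0

lemma coeff_lam (a j : ℕ) :
    coeff j (lam a) = if a ∣ j ∧ j ≠ 0 then -(a:ℚ) else 0 := coeff_mk ..

lemma sumlam (a N j : ℕ) (ha : 1 ≤ a) (hj : 1 ≤ j) (hjN : j ≤ N) :
    ∑ M ∈ Finset.Icc 1 N, coeff j (lam (a * M)) =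
      -(if a ∣ j then (a:ℚ) * (sigma1 (j / a) : ℚ) else 0) := by
  by_cases had : a ∣ j
  · obtain ⟨m, rfl⟩ := had
    have hm1 : 1 ≤ m := Nat.pos_of_ne_zero (by rintro rfl; simp at hj)
    have ha0 : 0 < a := by omega
    have hdiv : (a*m)/a = m := Nat.mul_div_cancel_left m ha0
    rw [if_pos (Dvd.intro m rfl), hdiv]
    have hco : ∀ M, coeff (a*m) (lam (a*M)) = if M ∣ m then -((a:ℚ) * M) else 0 := by
      intro M; rw [coeff_lam]
      by_cases hMm : M ∣ m
      · rw [if_pos ⟨mul_dvd_mul_left a hMm, by omega⟩, if_pos hMm]; push_cast; ring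
      · rw [if_neg, if_neg hMm]
        rintro ⟨hd, -⟩
        exact hMm ((Nat.mul_dvd_mul_iff_left ha0).mp hd)
    simp_rw [hco]
    rw [← Finset.sum_filter,
      filter_dvd_Icc_eq_divisors hm1 (le_trans (Nat.le_mul_of_pos_left m ha0) hjN)]
    rw [sigma1]
    push_cast
    rw [Finset.mul_sum, ← Finset.sum_neg_distrib]
  · rw [if_neg had]
    apply Finset.sum_eq_zero; intro M hM
    rw [coeff_lam, if_neg]
    rintro ⟨hd, -⟩
    exact had (dvd_trans (dvd_mul_right a M) hd)

lemma mul_sigmaTerm {j d : ℕ} (hj : 1 ≤ j) (hd : 1 ≤ d) :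
    (j:ℚ) * sigmaTerm j d = if d ∣ j then (d:ℚ) * (sigma1 (j/d) : ℚ) else 0 := by
  unfold sigmaTerm
  by_cases hdj : d ∣ j
  · rw [if_pos hdj, if_pos hdj]
    have h1 : 1 ≤ j / d := (Nat.one_le_div_iff (by omega)).mpr (Nat.le_of_dvd (by omega) hdj)
    have hne : ((j/d : ℕ):ℚ) ≠ 0 := Nat.cast_ne_zero.mpr (by omega)
    have hjd : (j : ℚ) = (d : ℚ) * ((j / d : ℕ) : ℚ) := by
      rw_mod_cast [Nat.mul_div_cancel' hdj]
    rw [hjd]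
    field_simp
  · simp [hdj]

lemma arith_core (p : ℕ) (hp : p.Prime) (hpo : Odd p) (n i h j : ℕ) (hj : 1 ≤ j)
    (S : ℕ → ℚ) (hS : ∀ d, S d = if d ∣ j then (d:ℚ) * (sigma1 (j/d) : ℚ) else 0) :
    ((n * (i + 2*h) : ℕ) : ℚ) * (-(S 1)) + ((n * (2*i + h) : ℕ) : ℚ) * (-(S 4))
      + ((n * (i + 2*h) : ℕ) : ℚ) * (-(S p)) + ((n * (2*i + h) : ℕ) : ℚ) * (-(S (4*p)))
    = ((3*n*(i+h) : ℕ) : ℚ) * (-(S 2)) + ((3*n*(i+h) : ℕ) : ℚ) * (-(S (2*p)))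
      + (j:ℚ) * (-(n:ℚ) * (if Odd j then ((i:ℚ)+2*(h:ℚ)) else (i:ℚ)) * alphaP p j) := by
  have hp1 : 1 ≤ p := hp.one_lt.le.trans' (by norm_num)
  have hp2 : ¬ 2 ∣ p := by
    have := Nat.odd_iff.mp hpo; omega
  have halpha : (j:ℚ) * alphaP p j
      = S 1 - 3 * S 2 + 2 * S 4 + S p - 3 * S (2*p) + 2 * S (4*p) := by
    unfold alphaP
    rw [hS 1, hS 2, hS 4, hS p, hS (2*p), hS (4*p)]
    rw [← mul_sigmaTerm hj (by norm_num), ← mul_sigmaTerm hj (by norm_num),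
      ← mul_sigmaTerm hj (by norm_num), ← mul_sigmaTerm hj hp1,
      ← mul_sigmaTerm hj (by omega), ← mul_sigmaTerm hj (by omega)]
    ring
  by_cases hodd : Odd j
  · have h2j : ¬ 2 ∣ j := by
      have := Nat.odd_iff.mp hodd; omega
    have hS2 : S 2 = 0 := by rw [hS]; exact if_neg (fun hc => h2j hc)
    have hS4 : S 4 = 0 := by rw [hS]; exact if_neg (fun hc => h2j (dvd_trans ⟨2, rfl⟩ hc))
    have hS2p : S (2*p) = 0 := by
      rw [hS]; exact if_neg (fun hc => h2j (dvd_trans (dvd_mul_right 2 p) hc))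
    have hS4p : S (4*p) = 0 := by
      rw [hS]; exact if_neg (fun hc => h2j (dvd_trans ⟨2*p, by ring⟩ hc))
    rw [hS2, hS4, hS2p, hS4p] at halpha
    rw [if_pos hodd, hS2, hS4, hS2p, hS4p]
    push_cast at halpha ⊢
    linear_combination ((n:ℚ)*((i:ℚ)+2*(h:ℚ))) * halpha
  · have h2j : 2 ∣ j := by
      have := Nat.not_odd_iff.mp hodd; omega
    -- key relation for the 2-part
    have keyQ : ∀ m : ℕ, 0 < m → 2 ∣ m →
        2*(sigma1 m : ℚ) + (if 4 ∣ m then (4:ℚ) * (sigma1 (m/4) : ℚ) else 0)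
          = 3 * (2 * (sigma1 (m/2) : ℚ)) := by
      intro m hm0 hm2
      have := sigma1_even_key hm0 hm2
      have hcast : (sigma1 m : ℚ) + 2 * (if 4 ∣ m then (sigma1 (m/4) : ℚ) else 0)
          = 3 * (sigma1 (m/2) : ℚ) := by
        exact_mod_cast this
      split_ifs at hcast ⊢ with h4
      · linear_combination 2 * hcast
      · linear_combination 2 * hcast
    have h1 : 2 * S 1 + S 4 = 3 * S 2 := by
      rw [hS 1, hS 2, hS 4, if_pos (one_dvd j), if_pos h2j, Nat.div_one]
      have := keyQ j (by omega) h2j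
      push_cast
      split_ifs with h4
      · split_ifs at this; linear_combination this
      · split_ifs at this; linear_combination this
    have h2 : 2 * S p + S (4*p) = 3 * S (2*p) := by
      by_cases hpj : p ∣ j
      · set m := j / p with hmdef
        have hjm : j = p * m := (Nat.mul_div_cancel' hpj).symm
        have hm0 : 0 < m :=
          Nat.div_pos (Nat.le_of_dvd (by omega) hpj) (by omega)
        have h2m : 2 ∣ m := by
          have hcop : Nat.Coprime 2 p := (Nat.prime_two.coprime_iff_not_dvd).mpr hp2
          exact hcop.dvd_of_dvd_mul_left (by rwa [← hjm])
        have hd2p : (2*p ∣ j) ↔ 2 ∣ m := by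
          rw [hjm, mul_comm 2 p]
          exact Nat.mul_dvd_mul_iff_left (by omega : 0 < p)
        have hd4p : (4*p ∣ j) ↔ 4 ∣ m := by
          rw [hjm, mul_comm 4 p]
          exact Nat.mul_dvd_mul_iff_left (by omega : 0 < p)
        have hq2p : j / (2*p) = m / 2 := by
          rw [mul_comm 2 p, ← Nat.div_div_eq_div_mul, ← hmdef]
        have hq4p : j / (4*p) = m / 4 := by
          rw [mul_comm 4 p, ← Nat.div_div_eq_div_mul, ← hmdef]
        have := keyQ m hm0 h2m
        rw [hS p, hS (2*p), hS (4*p), if_pos hpj, if_pos (hd2p.mpr h2m), hq2p, hq4p, ← hmdef]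
        simp only [hd4p]
        push_cast
        split_ifs at this ⊢ with h4
        · linear_combination (p:ℚ) * this
        · linear_combination (p:ℚ) * this
      · have hSp : S p = 0 := by rw [hS]; exact if_neg hpj
        have hS2p : S (2*p) = 0 := by
          rw [hS]; exact if_neg (fun hc => hpj (dvd_trans (dvd_mul_left p 2) hc))
        have hS4p : S (4*p) = 0 := by
          rw [hS]; exact if_neg (fun hc => hpj (dvd_trans (dvd_mul_left p 4) hc))
        rw [hSp, hS2p, hS4p]; ring
    rw [if_neg hodd]
    push_cast at halpha ⊢
    linear_combination ((n:ℚ)*(i:ℚ)) * halpha + (-(n:ℚ)*(h:ℚ)) * h1 + (-(n:ℚ)*(h:ℚ)) * h2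

/-- φ agrees with 1 in all coefficients up to degree d. -/
def OneUpto (d : ℕ) (φ : PowerSeries ℚ) : Prop :=
  ∀ j ≤ d, coeff j φ = if j = 0 then 1 else 0

lemma OneUpto.mono {d e : ℕ} {φ} (h : OneUpto e φ) (hde : d ≤ e) : OneUpto d φ :=
  fun j hj => h j (hj.trans hde)

lemma oneUpto_one (d : ℕ) : OneUpto d 1 := by
  intro j _; rw [coeff_one]

lemma OneUpto.mul {d : ℕ} {φ ψ} (hφ : OneUpto d φ) (hψ : OneUpto d ψ) :
    OneUpto d (φ * ψ) := by
  intro j hj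
  rw [coeff_mul]
  rcases Nat.eq_zero_or_pos j with rfl | hj0
  · simp only [Finset.Nat.antidiagonal_zero, Finset.sum_singleton]
    rw [hφ 0 (by omega), hψ 0 (by omega)]
    simp
  · rw [if_neg (by omega)]
    apply Finset.sum_eq_zero
    rintro ⟨x, y⟩ hxy
    rw [Finset.HasAntidiagonal.mem_antidiagonal] at hxy
    rw [hφ x (by omega), hψ y (by omega)]
    rcases Nat.eq_zero_or_pos x with rfl | hx
    · rw [if_neg (by omega : ¬ y = 0), mul_zero]
    · rw [if_neg (by omega : ¬ x = 0), zero_mul]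

lemma OneUpto.pow {d : ℕ} {φ} (hφ : OneUpto d φ) (t : ℕ) : OneUpto d (φ ^ t) := by
  induction t with
  | zero => simpa using oneUpto_one d
  | succ s ih => rw [pow_succ]; exact ih.mul hφ

lemma OneUpto.prod {d : ℕ} {ι : Type*} {s : Finset ι} {f : ι → PowerSeries ℚ}
    (h : ∀ x ∈ s, OneUpto d (f x)) : OneUpto d (∏ x ∈ s, f x) := by
  classical
  induction s using Finset.induction with
  | empty => simpa using oneUpto_one d
  | insert _ _ hx ih =>
    rw [Finset.prod_insert hx]
    exact (h _ (Finset.mem_insert_self _ _)).mul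
      (ih fun x hxs => h x (Finset.mem_insert_of_mem hxs))

lemma coeff_mul_oneUpto {d : ℕ} {A T : PowerSeries ℚ} (hT : OneUpto d T) :
    coeff d (A * T) = coeff d A := by
  rw [coeff_mul]
  rw [Finset.sum_eq_single_of_mem (d, 0) (by simp)]
  · rw [hT 0 (by omega), if_pos rfl, mul_one]
  · rintro ⟨x, y⟩ hxy hne
    rw [Finset.HasAntidiagonal.mem_antidiagonal] at hxy
    rw [hT y (by omega), if_neg, mul_zero]
    rintro rfl
    exact hne (by simpa using hxy)

/-- The family f has f M = 1 + O(X^M) for M ≥ 1. -/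
def NiceFam (f : ℕ → PowerSeries ℚ) : Prop :=
  ∀ M, 1 ≤ M → ∀ j < M, coeff j (f M) = if j = 0 then 1 else 0

lemma NiceFam.oneUpto {f : ℕ → PowerSeries ℚ} (hf : NiceFam f) {d M : ℕ}
    (h1 : 1 ≤ M) (hdM : d < M) : OneUpto d (f M) :=
  fun j hj => hf M h1 j (by omega)

lemma coeff_prod_stab {f : ℕ → PowerSeries ℚ} (hf : NiceFam f) {d N : ℕ} (hdN : d ≤ N) :
    coeff d (∏ M ∈ Finset.Icc 1 N, f M) = coeff d (∏ M ∈ Finset.Icc 1 d, f M) := by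
  have hsplit : (∏ M ∈ Finset.Ioc 0 d, f M) * ∏ M ∈ Finset.Ioc d N, f M
      = ∏ M ∈ Finset.Ioc 0 N, f M := Finset.prod_Ioc_consecutive f (Nat.zero_le d) hdN
  have h1 : Finset.Icc 1 N = Finset.Ioc 0 N := by rw [← Finset.Icc_add_one_left_eq_Ioc]; rfl
  have h2 : Finset.Icc 1 d = Finset.Ioc 0 d := by rw [← Finset.Icc_add_one_left_eq_Ioc]; rfl
  rw [h1, h2, ← hsplit]
  exact coeff_mul_oneUpto (OneUpto.prod (fun M hM => by
    rw [Finset.mem_Ioc] at hM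
    exact hf.oneUpto (by omega) (by omega)))

lemma coeff_infProd {f : ℕ → PowerSeries ℚ} (hf : NiceFam f) {d N : ℕ} (hdN : d ≤ N) :
    coeff d (infProd f) = coeff d (∏ M ∈ Finset.Icc 1 N, f M) := by
  rw [infProd, coeff_mk, coeff_prod_stab hf hdN]

lemma NiceFam.mul {f g : ℕ → PowerSeries ℚ} (hf : NiceFam f) (hg : NiceFam g) :
    NiceFam (fun M => f M * g M) := by
  intro M h1 j hj
  exact ((hf.oneUpto h1 hj).mul (hg.oneUpto h1 hj)) j le_rfl

lemma infProd_mul {f g : ℕ → PowerSeries ℚ} (hf : NiceFam f) (hg : NiceFam g) :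
    infProd (fun M => f M * g M) = infProd f * infProd g := by
  ext d
  rw [infProd, coeff_mk, Finset.prod_mul_distrib, coeff_mul, coeff_mul]
  apply Finset.sum_congr rfl
  rintro ⟨x, y⟩ hxy
  rw [Finset.HasAntidiagonal.mem_antidiagonal] at hxy
  rw [coeff_infProd hf (by omega : x ≤ d), coeff_infProd hg (by omega : y ≤ d)]

----------------------------------------------------------------
-- logarithmic derivative machinery

noncomputable abbrev Dq (F : PowerSeries ℚ) : PowerSeries ℚ := PowerSeries.derivative ℚ F

def logd (F L : PowerSeries ℚ) : Prop := X * Dq F = L * F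

lemma logd_one : logd 1 0 := by
  unfold logd Dq
  rw [Derivation.map_one_eq_zero]
  simp

lemma logd_mul {F G L M : PowerSeries ℚ} (hF : logd F L) (hG : logd G M) :
    logd (F * G) (L + M) := by
  unfold logd Dq at *
  rw [Derivation.leibniz, smul_eq_mul, smul_eq_mul, mul_add]
  calc X * (F * (PowerSeries.derivative ℚ G)) + X * (G * (PowerSeries.derivative ℚ F))
      = F * (X * PowerSeries.derivative ℚ G) + G * (X * PowerSeries.derivative ℚ F) := by ring
    _ = F * (M * G) + G * (L * F) := by rw [hF, hG]
    _ = (L + M) * (F * G) := by ring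

lemma logd_pow {F L : PowerSeries ℚ} (hF : logd F L) (t : ℕ) :
    logd (F ^ t) ((t : ℚ) • L) := by
  induction t with
  | zero => simpa using logd_one
  | succ s ih =>
    rw [pow_succ, show ((s+1 : ℕ) : ℚ) = (s:ℚ) + 1 by push_cast; ring, add_smul, one_smul]
    exact logd_mul ih hF

lemma logd_prod {ι : Type*} {s : Finset ι} {f : ι → PowerSeries ℚ} {L : ι → PowerSeries ℚ}
    (h : ∀ x ∈ s, logd (f x) (L x)) :
    logd (∏ x ∈ s, f x) (∑ x ∈ s, L x) := by
  classical
  induction s using Finset.induction with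
  | empty => simpa using logd_one
  | insert _ _ hx ih =>
    rw [Finset.prod_insert hx, Finset.sum_insert hx]
    exact logd_mul (h _ (Finset.mem_insert_self _ _))
      (ih fun x hxs => h x (Finset.mem_insert_of_mem hxs))

lemma logd_one_sub_X_pow (a : ℕ) (ha : 1 ≤ a) : logd (1 - X ^ a) (lam a) := by
  unfold logd Dq
  have hD : ∀ m : ℕ, coeff m (PowerSeries.derivative ℚ (1 - X^a : PowerSeries ℚ))
      = if m + 1 = a then -((m:ℚ)+1) else 0 := by
    intro m
    rw [PowerSeries.coeff_derivative, map_sub, coeff_one, coeff_X_pow,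
      if_neg (by omega : ¬ m + 1 = 0)]
    split_ifs with hma
    · push_cast; ring
    · push_cast; ring
  have hLHS : ∀ j, coeff j (X * PowerSeries.derivative ℚ (1 - X^a : PowerSeries ℚ))
      = if j = a then -(a:ℚ) else 0 := by
    intro j
    rcases j with _ | m
    · rw [PowerSeries.coeff_zero_X_mul, if_neg (by omega)]
    · rw [PowerSeries.coeff_succ_X_mul, hD]
      split_ifs with hma
      · rw [show ((m:ℚ)+1) = (a:ℚ) by exact_mod_cast hma]
      · rfl
  ext j
  rw [hLHS, mul_sub, mul_one, map_sub, PowerSeries.coeff_mul_X_pow']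
  simp only [coeff_lam]
  by_cases h1 : a ∣ j
  · rcases Nat.eq_zero_or_pos j with rfl | hjpos
    · rw [if_neg (by omega : ¬ (0:ℕ) = a), if_neg (by simp : ¬ (a ∣ 0 ∧ (0:ℕ) ≠ 0)),
        if_neg (by omega : ¬ a ≤ 0)]
      ring
    · have hle : a ≤ j := Nat.le_of_dvd hjpos h1
      by_cases h2 : j = a
      · rw [if_pos h2, if_pos ⟨h1, by omega⟩, if_pos hle, show j - a = 0 by omega,
          if_neg (by simp : ¬ (a ∣ 0 ∧ (0:ℕ) ≠ 0)), sub_zero]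
      · rw [if_neg h2, if_pos ⟨h1, by omega⟩, if_pos hle,
          if_pos ⟨Nat.dvd_sub h1 dvd_rfl, by
            rcases h1 with ⟨q, hq⟩
            have h2q : 2 ≤ q := by rcases q with _|_|q <;> omega
            omega⟩]
        ring
  · have hnd : ¬ (a ∣ j - a ∧ j - a ≠ 0) := by
      rintro ⟨hd, hne⟩
      rcases le_or_gt a j with hle | hlt
      · exact h1 (by have := Nat.dvd_add hd (dvd_refl a); rwa [Nat.sub_add_cancel hle] at this)
      · omega
    rw [if_neg (by rintro rfl; exact h1 dvd_rfl), if_neg (fun hc => h1 hc.1)]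
    by_cases h3 : a ≤ j
    · rw [if_pos h3, if_neg hnd]; ring
    · rw [if_neg h3]; ring

noncomputable def expk (k : ℕ) (c : ℚ) : PowerSeries ℚ :=
  PowerSeries.mk fun d => if k ∣ d then c ^ (d / k) / (Nat.factorial (d / k)) else 0

lemma coeff_expk (k : ℕ) (c : ℚ) (d : ℕ) :
    coeff d (expk k c) = if k ∣ d then c ^ (d / k) / (Nat.factorial (d / k)) else 0 :=
  coeff_mk ..

lemma logd_expk (k : ℕ) (hk : 1 ≤ k) (c : ℚ) :
    logd (expk k c) ((C ((k:ℚ) * c)) * X ^ k) := by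
  unfold logd Dq
  ext j
  rw [mul_assoc, coeff_C_mul, PowerSeries.coeff_X_pow_mul']
  rcases j with _ | m
  · rw [PowerSeries.coeff_zero_X_mul, if_neg (by omega)]
    ring
  · rw [PowerSeries.coeff_succ_X_mul, PowerSeries.coeff_derivative, coeff_expk]
    by_cases h1 : k ∣ (m+1)
    · obtain ⟨q, hq⟩ := h1
      have hq1 : 1 ≤ q := by rcases q with _|q <;> omega
      obtain ⟨r, rfl⟩ : ∃ r, q = r + 1 := ⟨q - 1, by omega⟩
      have hkle : k ≤ m + 1 := by
        calc k = k * 1 := by ring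
        _ ≤ k * (r+1) := Nat.mul_le_mul_left k (by omega)
        _ = m + 1 := hq.symm
      have hdiv : (m+1) / k = r + 1 := by rw [hq, Nat.mul_div_cancel_left _ (by omega)]
      have hsub : m + 1 - k = k * r := by
        have hexp : m + 1 = k * r + k := by rw [hq]; ring
        omega
      have hdiv2 : (m + 1 - k) / k = r := by rw [hsub, Nat.mul_div_cancel_left _ (by omega)]
      rw [if_pos ⟨r+1, hq⟩, hdiv, if_pos hkle, coeff_expk, hsub,
        if_pos (dvd_mul_right k r), Nat.mul_div_cancel_left r (by omega : 0 < k)]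
      have hcast : ((m:ℚ) + 1) = (k:ℚ) * ((r:ℚ)+1) := by exact_mod_cast hq
      have hfac : ((r+1).factorial : ℚ) = ((r:ℚ)+1) * (r.factorial : ℚ) := by
        rw [Nat.factorial_succ]; push_cast; ring
      rw [hcast, hfac, pow_succ]
      have h1 : ((r.factorial : ℚ)) ≠ 0 := Nat.cast_ne_zero.mpr (Nat.factorial_ne_zero r)
      have h2 : ((r:ℚ)+1) ≠ 0 := by positivity
      field_simp
    · rw [if_neg h1]
      split_ifs with h2
      · rw [coeff_expk, if_neg, mul_zero, zero_mul]
        intro hd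
        exact h1 (by have := Nat.dvd_add hd (dvd_refl k); rwa [Nat.sub_add_cancel h2] at this)
      · rw [zero_mul, mul_zero]

lemma ps_eq_of_logderiv {F G : PowerSeries ℚ}
    (h0F : coeff 0 F = 1) (h0G : coeff 0 G = 1)
    (hD : Dq F * G = Dq G * F) : F = G := by
  ext d
  induction d using Nat.strong_induction_on with
  | _ d ih =>
    rcases d with _ | d
    · rw [h0F, h0G]
    · have hcoeff := congrArg (coeff d) hD
      rw [coeff_mul, coeff_mul] at hcoeff
      have key : ∑ x ∈ Finset.HasAntidiagonal.antidiagonal d,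
          (coeff x.1 (Dq F) * coeff x.2 G - coeff x.1 (Dq G) * coeff x.2 F) = 0 := by
        rw [Finset.sum_sub_distrib, hcoeff, sub_self]
      rw [Finset.sum_eq_single_of_mem (d, 0) (by simp)] at key
      · simp only [PowerSeries.coeff_derivative, h0F, h0G, mul_one] at key
        have hne : ((d:ℚ) + 1) ≠ 0 := by positivity
        have := sub_eq_zero.mp key
        field_simp at this
        exact this
      · rintro ⟨x, y⟩ hxy hne2
        rw [Finset.HasAntidiagonal.mem_antidiagonal] at hxy
        have hx : x < d := by
          by_contra hcon
          push_neg at hcon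
          have hxd : x = d := by omega
          subst hxd
          have hy : y = 0 := by omega
          exact hne2 (by rw [hy])
        simp only [PowerSeries.coeff_derivative]
        rw [ih (x+1) (by omega), ih y (by omega)]
        ring

lemma card_filter_multiset (s : Multiset ℕ) (pr : ℕ → Prop) [DecidablePred pr] :
    Multiset.card (s.filter pr) = ∑ a ∈ s.toFinset.filter pr, s.count a := by
  rw [← Multiset.toFinset_sum_count_eq (s.filter pr), Multiset.toFinset_filter]
  apply Finset.sum_congr rfl
  intro a ha
  rw [Finset.mem_filter] at ha
  rw [Multiset.count_filter, if_pos ha.2]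

lemma parts_le {l : ℕ} (J : l.Partition) {k : ℕ} (hk : k ∈ J.parts) : k ≤ l := by
  rw [← J.parts_sum]
  obtain ⟨t, ht⟩ := Multiset.exists_cons_of_mem hk
  rw [ht, Multiset.sum_cons]
  omega

lemma toFinset_subset_Icc {l : ℕ} (J : l.Partition) :
    J.parts.toFinset ⊆ Finset.Icc 1 l := by
  intro k hk
  rw [Multiset.mem_toFinset] at hk
  rw [Finset.mem_Icc]
  exact ⟨J.parts_pos hk, parts_le J hk⟩

noncomputable def phiJ {l : ℕ} (J : l.Partition) : ℕ →₀ ℕ :=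
  Finsupp.onFinset J.parts.toFinset (fun k => k * Multiset.count k J.parts)
    (fun k hk => Multiset.mem_toFinset.mpr (Multiset.count_pos.mp
      (Nat.pos_of_ne_zero (fun h => hk (by simp [h])))))

lemma phiJ_apply {l : ℕ} (J : l.Partition) (k : ℕ) :
    phiJ J k = k * Multiset.count k J.parts := rfl

lemma phiJ_support {l : ℕ} (J : l.Partition) : (phiJ J).support ⊆ J.parts.toFinset :=
  Finsupp.support_onFinset_subset

lemma phiJ_sum {l : ℕ} (J : l.Partition) : ∑ k ∈ Finset.Icc 1 l, phiJ J k = l := by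
  rw [← Finset.sum_subset (toFinset_subset_Icc J) (fun k _ hk => by
    rw [phiJ_apply, Multiset.count_eq_zero_of_notMem (fun hc => hk (Multiset.mem_toFinset.mpr hc)),
      mul_zero])]
  have hmap := Finset.sum_multiset_map_count J.parts (fun x => x)
  rw [Multiset.map_id'] at hmap
  have heq : ∑ x ∈ J.parts.toFinset, phiJ J x = J.parts.sum := by
    rw [hmap]
    apply Finset.sum_congr rfl
    intro k _
    rw [phiJ_apply, smul_eq_mul]
    ring
  rw [heq, J.parts_sum]

lemma multiset_sum_finset_sum {ι : Type*} (s : Finset ι) (f : ι → Multiset ℕ) :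
    (∑ x ∈ s, f x).sum = ∑ x ∈ s, (f x).sum := by
  classical
  induction s using Finset.induction with
  | empty => simp
  | insert _ _ hx ih => rw [Finset.sum_insert hx, Finset.sum_insert hx, Multiset.sum_add, ih]

def psiParts (φ : ℕ →₀ ℕ) : Multiset ℕ :=
  ∑ k ∈ φ.support, Multiset.replicate (φ k / k) k

lemma count_psiParts (φ : ℕ →₀ ℕ) (m : ℕ) :
    Multiset.count m (psiParts φ) = if m ∈ φ.support then φ m / m else 0 := by
  rw [psiParts, Multiset.count_sum']
  simp_rw [Multiset.count_replicate]
  rw [Finset.sum_ite_eq' φ.support m (fun k => φ k / k)]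

def psiJ (l : ℕ) (φ : ℕ →₀ ℕ) (hsupp : ∀ k ∈ φ.support, 1 ≤ k ∧ k ≤ l)
    (hdvd : ∀ k ∈ φ.support, k ∣ φ k) (hsum : ∑ k ∈ φ.support, φ k = l) :
    l.Partition where
  parts := psiParts φ
  parts_pos := by
    intro i hi
    rw [psiParts, Multiset.mem_sum] at hi
    obtain ⟨k, hk, hmem⟩ := hi
    rw [Multiset.eq_of_mem_replicate hmem]
    exact (hsupp k hk).1
  parts_sum := by
    rw [psiParts, multiset_sum_finset_sum, ← hsum]
    apply Finset.sum_congr rfl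
    intro k hk
    rw [Multiset.sum_replicate, smul_eq_mul]
    exact Nat.div_mul_cancel (hdvd k hk)

set_option maxHeartbeats 1000000 in
theorem bP_eq_coeff_prod (p n l : ℕ) (u v : ℚ) (c : ℕ → ℚ)
    (hc : ∀ k, c k = -(n:ℚ) * (if Odd k then u else v) * alphaP p k) :
    bP p n l u v = coeff l (∏ k ∈ Finset.Icc 1 l, expk k (c k)) := by
  classical
  rw [PowerSeries.coeff_prod]
  rw [← Finset.sum_filter_of_ne (p := fun φ : ℕ →₀ ℕ => ∀ k ∈ Finset.Icc 1 l, k ∣ φ k)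
    (by
      intro φ hφ hne k hk
      by_contra hdvd
      apply hne
      apply Finset.prod_eq_zero hk
      rw [coeff_expk, if_neg hdvd])]
  rw [bP]
  refine Finset.sum_bij'
    (i := fun J _ => phiJ J)
    (j := fun φ hφ => psiJ l φ
      (by
        rw [Finset.mem_filter, Finset.mem_finsuppAntidiag] at hφ
        intro k hk
        have := hφ.1.2 hk
        rwa [Finset.mem_Icc] at this)
      (by
        rw [Finset.mem_filter, Finset.mem_finsuppAntidiag] at hφ
        intro k hk
        exact hφ.2 k (hφ.1.2 hk))
      (by
        rw [Finset.mem_filter, Finset.mem_finsuppAntidiag] at hφ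
        rw [Finset.sum_subset hφ.1.2 (fun k _ hk => Finsupp.notMem_support_iff.mp hk)]
        exact hφ.1.1))
    ?hi ?hj ?left ?right ?terms
  case hi =>
    intro J _
    rw [Finset.mem_filter, Finset.mem_finsuppAntidiag]
    refine ⟨⟨phiJ_sum J, fun k hk => toFinset_subset_Icc J (phiJ_support J hk)⟩, ?_⟩
    intro k _
    rw [phiJ_apply]
    exact dvd_mul_right k _
  case hj =>
    intro φ hφ
    exact Finset.mem_univ _
  case left =>
    intro J _
    apply Nat.Partition.ext
    show psiParts (phiJ J) = J.parts
    ext m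
    rw [count_psiParts]
    by_cases hm : m ∈ (phiJ J).support
    · have hm0 : m ≠ 0 := by
        rintro rfl
        rw [Finsupp.mem_support_iff, phiJ_apply, zero_mul] at hm
        exact hm rfl
      rw [if_pos hm, phiJ_apply, Nat.mul_div_cancel_left _ (by omega : 0 < m)]
    · rw [if_neg hm]
      rw [Finsupp.notMem_support_iff, phiJ_apply] at hm
      rcases Nat.eq_zero_or_pos m with rfl | hmpos
      · symm
        rw [Multiset.count_eq_zero]
        intro hcmem
        exact absurd (J.parts_pos hcmem) (by omega)
      · symm
        rw [Multiset.count_eq_zero]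
        intro hcmem
        rcases Nat.mul_eq_zero.mp hm with h | h
        · omega
        · rw [← Multiset.count_pos] at hcmem; omega
  case right =>
    intro φ hφ
    rw [Finset.mem_filter, Finset.mem_finsuppAntidiag] at hφ
    ext k
    show k * Multiset.count k (psiParts φ) = φ k
    rw [count_psiParts]
    by_cases hk : k ∈ φ.support
    · rw [if_pos hk]
      exact Nat.mul_div_cancel' (hφ.2 k (hφ.1.2 hk))
    · rw [if_neg hk, mul_zero]
      exact (Finsupp.notMem_support_iff.mp hk).symm
  case terms =>
    intro J _
    have houtside : ∀ k ∈ Finset.Icc 1 l, k ∉ J.parts.toFinset →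
        coeff (phiJ J k) (expk k (c k)) = 1 := by
      intro k _ hk
      rw [phiJ_apply, Multiset.count_eq_zero_of_notMem
        (fun hcmem => hk (Multiset.mem_toFinset.mpr hcmem)), mul_zero, coeff_expk,
        if_pos (dvd_zero k), Nat.zero_div]
      simp
    rw [← Finset.prod_subset (toFinset_subset_Icc J) houtside]
    have hcoeff : ∀ k ∈ J.parts.toFinset,
        coeff (phiJ J k) (expk k (c k))
          = (-(n:ℚ))^(mult J k) * ((if Odd k then u else v))^(mult J k)
            * (alphaP p k ^ (mult J k) / (Nat.factorial (mult J k))) := by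
      intro k hk
      have hk1 : 0 < k := J.parts_pos (Multiset.mem_toFinset.mp hk)
      rw [phiJ_apply, coeff_expk, if_pos (dvd_mul_right k _),
        Nat.mul_div_cancel_left _ hk1, hc, mult]
      rw [mul_pow, mul_pow]
      ring
    rw [Finset.prod_congr rfl hcoeff, Finset.prod_mul_distrib, Finset.prod_mul_distrib,
      Finset.prod_pow_eq_pow_sum]
    have hnorm : ∑ k ∈ J.parts.toFinset, mult J k = normJ J :=
      Multiset.toFinset_sum_count_eq J.parts
    have hw : ∏ k ∈ J.parts.toFinset, (if Odd k then u else v) ^ mult J k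
        = u ^ oddJ J * v ^ evenJ J := by
      rw [← Finset.prod_filter_mul_prod_filter_not J.parts.toFinset Odd]
      congr 1
      · rw [Finset.prod_congr rfl (fun k hk => by rw [if_pos (Finset.mem_filter.mp hk).2]),
          Finset.prod_pow_eq_pow_sum, oddJ, card_filter_multiset]
        rfl
      · rw [Finset.prod_congr rfl (fun k hk => by rw [if_neg (Finset.mem_filter.mp hk).2]),
          Finset.prod_pow_eq_pow_sum, evenJ, card_filter_multiset]
        congr 2
        apply Finset.filter_congr
        intro x _
        simp [Nat.not_odd_iff_even]
    rw [hnorm, hw, Wp]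
    ring


lemma sumlam1 (N j : ℕ) (hj : 1 ≤ j) (hjN : j ≤ N) :
    ∑ M ∈ Finset.Icc 1 N, coeff j (lam M) = -((sigma1 j : ℚ)) := by
  have h := sumlam 1 N j le_rfl hj hjN
  simp only [one_mul] at h
  rw [h, if_pos (one_dvd j), Nat.div_one, Nat.cast_one, one_mul]

lemma oneUpto_one_sub_X_pow_pow {d a : ℕ} (hda : d < a) (t : ℕ) :
    OneUpto d ((1 - X ^ a : PowerSeries ℚ) ^ t) :=
  OneUpto.pow (fun j hj => by
    rw [map_sub, coeff_one, coeff_X_pow, if_neg (show ¬ j = a by omega), sub_zero]) t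

lemma oneUpto_expk {d k : ℕ} (hdk : d < k) (c : ℚ) : OneUpto d (expk k c) := by
  intro j hj
  rw [coeff_expk]
  rcases eq_or_ne j 0 with rfl | hj0
  · rw [if_pos (dvd_zero k), Nat.zero_div, if_pos rfl]
    simp
  · rw [if_neg (fun hd => absurd (Nat.le_of_dvd (by omega) hd) (by omega)), if_neg hj0]

lemma coeff_zero_infProd (f : ℕ → PowerSeries ℚ) : coeff 0 (infProd f) = 1 := by
  rw [infProd, coeff_mk, Finset.Icc_eq_empty (by omega : ¬ (1:ℕ) ≤ 0), Finset.prod_empty, coeff_one, if_pos rfl]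

open PowerSeries in
theorem XiYh_q_expansion (p : ℕ) (hp : p.Prime) (hpodd : Odd p)
    (n : ℕ) (hn : 0 < n) (i h : ℕ) :
    infProd (fun M =>
        (1 - (X : PowerSeries ℚ) ^ M) ^ (n * (i + 2 * h))
          * (1 - (X : PowerSeries ℚ) ^ (4 * M)) ^ (n * (2 * i + h))
          * (1 - (X : PowerSeries ℚ) ^ (p * M)) ^ (n * (i + 2 * h))
          * (1 - (X : PowerSeries ℚ) ^ (4 * p * M)) ^ (n * (2 * i + h)))
      = infProd (fun M =>
          (1 - (X : PowerSeries ℚ) ^ (2 * M)) ^ (3 * n * (i + h))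
            * (1 - (X : PowerSeries ℚ) ^ (2 * p * M)) ^ (3 * n * (i + h))) *
        PowerSeries.mk (fun l => bP p n l ((i : ℚ) + 2 * h) i) := by
  classical
  have hp1 : 1 ≤ p := hp.pos
  -- notation
  set cc : ℕ → ℚ := fun k =>
    -(n:ℚ) * (if Odd k then ((i:ℚ) + 2 * (h:ℚ)) else (i:ℚ)) * alphaP p k with hcc
  set fF : ℕ → PowerSeries ℚ := fun M =>
    (1 - (X : PowerSeries ℚ) ^ M) ^ (n * (i + 2 * h))
      * (1 - (X : PowerSeries ℚ) ^ (4 * M)) ^ (n * (2 * i + h))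
      * (1 - (X : PowerSeries ℚ) ^ (p * M)) ^ (n * (i + 2 * h))
      * (1 - (X : PowerSeries ℚ) ^ (4 * p * M)) ^ (n * (2 * i + h)) with hfF
  set gO : ℕ → PowerSeries ℚ := fun M =>
    (1 - (X : PowerSeries ℚ) ^ (2 * M)) ^ (3 * n * (i + h))
      * (1 - (X : PowerSeries ℚ) ^ (2 * p * M)) ^ (3 * n * (i + h)) with hgO
  set fE : ℕ → PowerSeries ℚ := fun M => expk M (cc M) with hfE
  set fG : ℕ → PowerSeries ℚ := fun M => gO M * fE M with hfG
  -- niceness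
  have hNiceF : NiceFam fF := by
    intro M h1 j hj
    refine ((((oneUpto_one_sub_X_pow_pow (show j < M by omega) _).mul
      (oneUpto_one_sub_X_pow_pow (show j < 4*M by omega) _)).mul
      (oneUpto_one_sub_X_pow_pow (show j < p*M from
        lt_of_lt_of_le hj (Nat.le_mul_of_pos_left M hp.pos)) _)).mul
      (oneUpto_one_sub_X_pow_pow (show j < 4*p*M from
        lt_of_lt_of_le hj (Nat.le_mul_of_pos_left M (by omega))) _)) j le_rfl
  have hNiceO : NiceFam gO := by
    intro M h1 j hj
    exact ((oneUpto_one_sub_X_pow_pow (show j < 2*M by omega) _).mul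
      (oneUpto_one_sub_X_pow_pow (show j < 2*p*M from
        lt_of_lt_of_le hj (Nat.le_mul_of_pos_left M (by omega))) _)) j le_rfl
  have hNiceE : NiceFam fE := by
    intro M h1 j hj
    exact (oneUpto_expk (show j < M by omega) (cc M)) j le_rfl
  have hNiceG : NiceFam fG := hNiceO.mul hNiceE
  -- step 1 : the b-series is the infinite product of the exp factors
  have step1 : PowerSeries.mk (fun l => bP p n l ((i : ℚ) + 2 * h) i) = infProd fE := by
    ext l
    rw [coeff_mk, infProd, coeff_mk]
    exact bP_eq_coeff_prod p n l ((i : ℚ) + 2 * h) i cc (fun k => rfl)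
  rw [step1, ← infProd_mul hNiceO hNiceE]
  -- step 3 : equality of the two infinite products via logarithmic derivatives
  apply ps_eq_of_logderiv (coeff_zero_infProd _) (coeff_zero_infProd _)
  ext d
  set N := d + 1 with hN
  set FN := ∏ M ∈ Finset.Icc 1 N, fF M with hFN
  set GN := ∏ M ∈ Finset.Icc 1 N, fG M with hGN
  set LFM : ℕ → PowerSeries ℚ := fun M =>
    ((n * (i + 2 * h) : ℕ) : ℚ) • lam M + ((n * (2 * i + h) : ℕ) : ℚ) • lam (4*M)
      + ((n * (i + 2 * h) : ℕ) : ℚ) • lam (p*M)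
      + ((n * (2 * i + h) : ℕ) : ℚ) • lam (4*p*M) with hLFM
  set LGM : ℕ → PowerSeries ℚ := fun M =>
    ((3 * n * (i + h) : ℕ) : ℚ) • lam (2*M) + ((3 * n * (i + h) : ℕ) : ℚ) • lam (2*p*M)
      + (C ((M:ℚ) * cc M)) * X ^ M with hLGM
  set LFN := ∑ M ∈ Finset.Icc 1 N, LFM M with hLFN
  set LGN := ∑ M ∈ Finset.Icc 1 N, LGM M with hLGN
  have hlogF : logd FN LFN := by
    apply logd_prod
    intro M hM
    rw [Finset.mem_Icc] at hM
    have hM1 : 1 ≤ M := hM.1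
    have l1 : logd ((1 - (X : PowerSeries ℚ) ^ M) ^ (n * (i + 2 * h)))
        (((n * (i + 2 * h) : ℕ) : ℚ) • lam M) :=
      logd_pow (logd_one_sub_X_pow M hM1) _
    have l2 : logd ((1 - (X : PowerSeries ℚ) ^ (4*M)) ^ (n * (2 * i + h)))
        (((n * (2 * i + h) : ℕ) : ℚ) • lam (4*M)) :=
      logd_pow (logd_one_sub_X_pow (4*M) (by omega)) _
    have l3 : logd ((1 - (X : PowerSeries ℚ) ^ (p*M)) ^ (n * (i + 2 * h)))
        (((n * (i + 2 * h) : ℕ) : ℚ) • lam (p*M)) :=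
      logd_pow (logd_one_sub_X_pow (p*M) (by exact Nat.le_mul_of_pos_left M (by omega) |>.trans' hM.1)) _
    have l4 : logd ((1 - (X : PowerSeries ℚ) ^ (4*p*M)) ^ (n * (2 * i + h)))
        (((n * (2 * i + h) : ℕ) : ℚ) • lam (4*p*M)) :=
      logd_pow (logd_one_sub_X_pow (4*p*M) (by exact Nat.le_mul_of_pos_left M (by omega) |>.trans' hM.1)) _
    exact logd_mul (logd_mul (logd_mul l1 l2) l3) l4
  have hlogG : logd GN LGN := by
    apply logd_prod
    intro M hM
    rw [Finset.mem_Icc] at hM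
    have hM1 : 1 ≤ M := hM.1
    have l1 : logd ((1 - (X : PowerSeries ℚ) ^ (2*M)) ^ (3 * n * (i + h)))
        (((3 * n * (i + h) : ℕ) : ℚ) • lam (2*M)) :=
      logd_pow (logd_one_sub_X_pow (2*M) (by omega)) _
    have l2 : logd ((1 - (X : PowerSeries ℚ) ^ (2*p*M)) ^ (3 * n * (i + h)))
        (((3 * n * (i + h) : ℕ) : ℚ) • lam (2*p*M)) :=
      logd_pow (logd_one_sub_X_pow (2*p*M) (by exact Nat.le_mul_of_pos_left M (by omega) |>.trans' hM.1)) _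
    exact logd_mul (logd_mul l1 l2) (logd_expk M hM1 (cc M))
  -- the coefficients of the two logarithmic derivatives agree up to N
  have hLcoeff : ∀ x ≤ N, coeff x LFN = coeff x LGN := by
    intro x hxN
    have expandF : coeff x LFN
        = ((n * (i + 2 * h) : ℕ) : ℚ) * (∑ M ∈ Finset.Icc 1 N, coeff x (lam M))
          + ((n * (2 * i + h) : ℕ) : ℚ) * (∑ M ∈ Finset.Icc 1 N, coeff x (lam (4*M)))
          + ((n * (i + 2 * h) : ℕ) : ℚ) * (∑ M ∈ Finset.Icc 1 N, coeff x (lam (p*M)))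
          + ((n * (2 * i + h) : ℕ) : ℚ) * (∑ M ∈ Finset.Icc 1 N, coeff x (lam (4*p*M))) := by
      rw [hLFN, map_sum]
      simp only [hLFM, map_add, map_smul, smul_eq_mul]
      rw [Finset.sum_add_distrib, Finset.sum_add_distrib, Finset.sum_add_distrib,
        ← Finset.mul_sum, ← Finset.mul_sum, ← Finset.mul_sum, ← Finset.mul_sum]
    have expandG : coeff x LGN
        = ((3 * n * (i + h) : ℕ) : ℚ) * (∑ M ∈ Finset.Icc 1 N, coeff x (lam (2*M)))
          + ((3 * n * (i + h) : ℕ) : ℚ) * (∑ M ∈ Finset.Icc 1 N, coeff x (lam (2*p*M)))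
          + (∑ M ∈ Finset.Icc 1 N, if x = M then (M:ℚ) * cc M else 0) := by
      rw [hLGN, map_sum]
      simp only [hLGM, map_add, map_smul, smul_eq_mul, coeff_C_mul, coeff_X_pow,
        mul_ite, mul_one, mul_zero]
      rw [Finset.sum_add_distrib, Finset.sum_add_distrib,
        ← Finset.mul_sum, ← Finset.mul_sum]
    rcases Nat.eq_zero_or_pos x with rfl | hx1
    · have hz : ∀ a : ℕ, coeff 0 (lam a) = 0 := fun a => by
        rw [coeff_lam, if_neg (by simp)]
      have hzsum : ∀ (g : ℕ → ℕ), (∑ M ∈ Finset.Icc 1 N, coeff 0 (lam (g M))) = 0 :=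
        fun g => Finset.sum_eq_zero (fun M _ => hz (g M))
      rw [expandF, expandG,
        show (∑ M ∈ Finset.Icc 1 N, coeff 0 (lam M)) = 0 from
          Finset.sum_eq_zero fun M _ => hz M,
        hzsum (fun M => 4*M), hzsum (fun M => p*M), hzsum (fun M => 4*p*M),
        hzsum (fun M => 2*M), hzsum (fun M => 2*p*M),
        Finset.sum_eq_zero (fun M hM => by
          rw [Finset.mem_Icc] at hM
          rw [if_neg (by omega)])]
      ring
    · have h1sum : (∑ M ∈ Finset.Icc 1 N, coeff x (lam M))
          = ∑ M ∈ Finset.Icc 1 N, coeff x (lam (1*M)) := by simp only [one_mul]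
      rw [expandF, expandG, h1sum]
      rw [sumlam 1 N x le_rfl hx1 hxN, sumlam 4 N x (by omega) hx1 hxN,
        sumlam p N x hp1 hx1 hxN, sumlam (4*p) N x (by omega) hx1 hxN,
        sumlam 2 N x (by omega) hx1 hxN, sumlam (2*p) N x (by omega) hx1 hxN,
        Finset.sum_ite_eq (Finset.Icc 1 N) x (fun M => (M:ℚ) * cc M),
        if_pos (Finset.mem_Icc.mpr ⟨hx1, hxN⟩)]
      have hcore := arith_core p hp hpodd n i h x hx1
        (fun dd => if dd ∣ x then (dd:ℚ) * (sigma1 (x/dd) : ℚ) else 0) (fun dd => rfl)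
      simp only [hcc]
      exact hcore
  -- transfer from the truncations to the infinite products
  have hcoeffDF : ∀ y ≤ d, coeff y (Dq (infProd fF)) = coeff y (Dq FN) := by
    intro y hy
    rw [PowerSeries.coeff_derivative, PowerSeries.coeff_derivative,
      coeff_infProd hNiceF (show y + 1 ≤ N by omega)]
  have hcoeffDG : ∀ y ≤ d, coeff y (Dq (infProd fG)) = coeff y (Dq GN) := by
    intro y hy
    rw [PowerSeries.coeff_derivative, PowerSeries.coeff_derivative,
      coeff_infProd hNiceG (show y + 1 ≤ N by omega)]
  have htransF : coeff d (Dq (infProd fF) * infProd fG) = coeff d (Dq FN * GN) := by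
    rw [coeff_mul, coeff_mul]
    apply Finset.sum_congr rfl
    rintro ⟨a, b⟩ hab
    rw [Finset.HasAntidiagonal.mem_antidiagonal] at hab
    rw [hcoeffDF a (by omega), coeff_infProd hNiceG (show b ≤ N by omega)]
  have htransG : coeff d (Dq (infProd fG) * infProd fF) = coeff d (Dq GN * FN) := by
    rw [coeff_mul, coeff_mul]
    apply Finset.sum_congr rfl
    rintro ⟨a, b⟩ hab
    rw [Finset.HasAntidiagonal.mem_antidiagonal] at hab
    rw [hcoeffDG a (by omega), coeff_infProd hNiceF (show b ≤ N by omega)]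
  rw [htransF, htransG]
  -- now use the logd identities
  have hXF : X * (Dq FN * GN) = LFN * (FN * GN) := by
    rw [← mul_assoc, hlogF]
    ring
  have hXG : X * (Dq GN * FN) = LGN * (FN * GN) := by
    rw [← mul_assoc, hlogG]
    ring
  have hfinal : coeff (d+1) (LFN * (FN * GN)) = coeff (d+1) (LGN * (FN * GN)) := by
    rw [coeff_mul, coeff_mul]
    apply Finset.sum_congr rfl
    rintro ⟨a, b⟩ hab
    rw [Finset.HasAntidiagonal.mem_antidiagonal] at hab
    rw [hLcoeff a (by omega)]
  calc coeff d (Dq FN * GN) = coeff (d+1) (X * (Dq FN * GN)) :=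
        (PowerSeries.coeff_succ_X_mul d _).symm
    _ = coeff (d+1) (LFN * (FN * GN)) := by rw [hXF]
    _ = coeff (d+1) (LGN * (FN * GN)) := hfinal
    _ = coeff (d+1) (X * (Dq GN * FN)) := by rw [hXG]
    _ = coeff d (Dq GN * FN) := PowerSeries.coeff_succ_X_mul d _
end

section
/- Let p be an odd prime, n a positive integer, m ≥ 1, and 1 ≤ i ≤ m. The (m+1−i)×(m+1−i) matrix A^{i,i} = (b_l(i+2h, i))_{0≤l,h≤m−i} is nonsingular, with determinant det A^{i,i} = (−2n)^{(m+1−i)(m−i)/2}. -/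
open Finset

section Aux

open Polynomial

lemma alphaP_one (p : ℕ) (hp : p.Prime) : alphaP p 1 = 1 := by
  have h2 : ¬ (2 ∣ 1) := by decide
  have h4 : ¬ (4 ∣ 1) := by decide
  have hpp : ¬ (p ∣ 1) := by
    rw [Nat.dvd_one]; exact hp.ne_one
  have h2p : ¬ (2 * p ∣ 1) := by
    rw [Nat.dvd_one]; intro h; omega
  have h4p : ¬ (4 * p ∣ 1) := by
    rw [Nat.dvd_one]; intro h; omega
  simp [alphaP, sigmaTerm, h2, h4, hpp, h2p, h4p, sigma1]

/-- The all-ones partition of `l`. -/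
def onesP (l : ℕ) : l.Partition :=
  ⟨Multiset.replicate l 1, fun h => by
      rw [Multiset.eq_of_mem_replicate h]; norm_num,
    by simp⟩

lemma card_le_weight {l : ℕ} (J : l.Partition) : Multiset.card J.parts ≤ l := by
  have h := Multiset.card_nsmul_le_sum (s := J.parts) (a := 1)
    (fun x hx => J.parts_pos hx)
  simpa [J.parts_sum] using h

lemma oddJ_le {l : ℕ} (J : l.Partition) : oddJ J ≤ l :=
  le_trans (Multiset.card_le_card (Multiset.filter_le _ _)) (card_le_weight J)

lemma eq_onesP_of_oddJ {l : ℕ} (J : l.Partition) (h : oddJ J = l) : J = onesP l := by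
  have hc1 : l ≤ Multiset.card J.parts := by
    have h2 : oddJ J ≤ Multiset.card J.parts :=
      Multiset.card_le_card (Multiset.filter_le _ _)
    omega
  have hcard : Multiset.card J.parts = l := le_antisymm (card_le_weight J) hc1
  have hall : ∀ x ∈ J.parts, x = 1 := by
    by_contra hx
    push_neg at hx
    obtain ⟨x, hxm, hx1⟩ := hx
    have hx2 : 2 ≤ x := by
      have := J.parts_pos hxm
      omega
    have hco : J.parts = x ::ₘ J.parts.erase x := (Multiset.cons_erase hxm).symm
    have hsum : J.parts.sum = x + (J.parts.erase x).sum := by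
      conv_lhs => rw [hco]
      simp
    have herase : Multiset.card (J.parts.erase x) ≤ (J.parts.erase x).sum := by
      have h := Multiset.card_nsmul_le_sum (s := J.parts.erase x) (a := 1)
        (fun y hy => J.parts_pos (Multiset.mem_of_mem_erase hy))
      simpa using h
    have hce : Multiset.card (J.parts.erase x) = l - 1 := by
      rw [Multiset.card_erase_of_mem hxm, hcard]; rfl
    have hs : x + (J.parts.erase x).sum = l := by rw [← hsum, J.parts_sum]
    omega
  apply Nat.Partition.ext
  show J.parts = Multiset.replicate l 1
  rw [Multiset.eq_replicate]
  exact ⟨hcard, hall⟩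

lemma normJ_onesP (l : ℕ) : normJ (onesP l) = l := by
  simp [normJ, onesP]

lemma oddJ_onesP (l : ℕ) : oddJ (onesP l) = l := by
  have : (Multiset.replicate l 1).filter Odd = Multiset.replicate l 1 :=
    Multiset.filter_eq_self.mpr (fun a ha => by
      rw [Multiset.eq_of_mem_replicate ha]; exact odd_one)
  simp [oddJ, onesP, this]

lemma evenJ_onesP (l : ℕ) : evenJ (onesP l) = 0 := by
  have : (Multiset.replicate l 1).filter Even = 0 :=
    Multiset.filter_eq_nil.mpr (fun a ha => by
      rw [Multiset.eq_of_mem_replicate ha]; exact Nat.not_even_one)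
  simp [evenJ, onesP, this]

lemma onesP_parts (l : ℕ) : (onesP l).parts = Multiset.replicate l 1 := rfl

lemma Wp_onesP (p : ℕ) (hp : p.Prime) (l : ℕ) :
    Wp p (onesP l) = 1 / (Nat.factorial l) := by
  rcases Nat.eq_zero_or_pos l with rfl | hl
  · simp [Wp, onesP_parts]
  · have htf : (onesP l).parts.toFinset = {1} := by
      rw [onesP_parts, Multiset.toFinset_replicate, if_neg hl.ne']
    have hmult : mult (onesP l) 1 = l := by
      rw [mult, onesP_parts, Multiset.count_replicate_self]
    rw [Wp, htf, Finset.prod_singleton, hmult, alphaP_one p hp, one_pow]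

/-- The polynomial in `u` whose evaluation gives `bP p n l u v`. -/
noncomputable def bPoly (p n : ℕ) (v : ℚ) (l : ℕ) : Polynomial ℚ :=
  ∑ J : l.Partition,
    Polynomial.C ((-(n : ℚ)) ^ normJ J * v ^ evenJ J * Wp p J) * Polynomial.X ^ (oddJ J)

lemma bPoly_eval (p n : ℕ) (v u : ℚ) (l : ℕ) :
    (bPoly p n v l).eval u = bP p n l u v := by
  rw [bPoly, Polynomial.eval_finset_sum, bP]
  refine Finset.sum_congr rfl fun J _ => ?_
  simp only [Polynomial.eval_mul, Polynomial.eval_C, Polynomial.eval_pow, Polynomial.eval_X]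
  ring

lemma bPoly_coeff_top (p n : ℕ) (hp : p.Prime) (v : ℚ) (l : ℕ) :
    (bPoly p n v l).coeff l = (-(n : ℚ)) ^ l / (Nat.factorial l) := by
  rw [bPoly, Polynomial.finset_sum_coeff]
  have hterm : ∀ J : l.Partition,
      (Polynomial.C ((-(n : ℚ)) ^ normJ J * v ^ evenJ J * Wp p J)
        * Polynomial.X ^ (oddJ J)).coeff l =
      if l = oddJ J then (-(n : ℚ)) ^ normJ J * v ^ evenJ J * Wp p J else 0 := by
    intro J
    rw [Polynomial.coeff_C_mul, Polynomial.coeff_X_pow]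
    by_cases h : l = oddJ J <;> simp [h]
  rw [Finset.sum_congr rfl (fun J _ => hterm J)]
  rw [Finset.sum_eq_single_of_mem (onesP l) (Finset.mem_univ _)]
  · rw [if_pos (oddJ_onesP l).symm, normJ_onesP, evenJ_onesP, Wp_onesP p hp]
    simp [div_eq_mul_inv]
  · intro J _ hJ
    rw [if_neg]
    intro h
    exact hJ (eq_onesP_of_oddJ J h.symm)

lemma bPoly_natDegree (p n : ℕ) (hp : p.Prime) (hn : 0 < n) (v : ℚ) (l : ℕ) :
    (bPoly p n v l).natDegree = l := by
  have hcoeff : (bPoly p n v l).coeff l ≠ 0 := by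
    rw [bPoly_coeff_top p n hp]
    apply div_ne_zero
    · apply pow_ne_zero
      simp only [neg_ne_zero, Nat.cast_ne_zero]
      omega
    · exact_mod_cast (Nat.factorial_pos l).ne'
  refine le_antisymm ?_ (Polynomial.le_natDegree_of_ne_zero hcoeff)
  apply Polynomial.natDegree_sum_le_of_forall_le
  intro J _
  exact le_trans (Polynomial.natDegree_C_mul_X_pow_le _ _) (oddJ_le J)

lemma prod_Iio_fin {M : ℕ} (b : Fin M) :
    (∏ a ∈ Finset.Iio b, (2 * ((b : ℚ) - (a : ℚ)))) =
      2 ^ (b : ℕ) * (Nat.factorial (b : ℕ)) := by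
  have hmap : (Finset.Iio b).map Fin.valEmbedding = Finset.Iio (b : ℕ) :=
    Fin.map_valEmbedding_Iio b
  have h1 : (∏ a ∈ Finset.Iio b, (2 * ((b : ℚ) - (a : ℚ)))) =
      ∏ a ∈ Finset.Iio (b : ℕ), (2 * ((b : ℚ) - (a : ℚ))) := by
    rw [← hmap, Finset.prod_map]
    rfl
  rw [h1, Finset.prod_mul_distrib, Finset.prod_const, Nat.card_Iio]
  congr 1
  have h2 : ∀ a ∈ Finset.range (b : ℕ), ((b : ℚ) - (a : ℚ)) = (((b : ℕ) - a : ℕ) : ℚ) := by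
    intro a ha
    rw [Finset.mem_range] at ha
    rw [Nat.cast_sub (le_of_lt ha)]
  rw [Nat.Iio_eq_range, Finset.prod_congr rfl h2, ← Nat.cast_prod,
    ← Nat.descFactorial_eq_prod_range, Nat.descFactorial_self]

end Aux

set_option maxHeartbeats 1600000 in
theorem Aii_det (p : ℕ) (hp : p.Prime) (hpodd : Odd p) (n : ℕ) (hn : 0 < n)
    (m i : ℕ) (hi1 : 1 ≤ i) (him : i ≤ m)
    (A : Matrix (Fin (m + 1 - i)) (Fin (m + 1 - i)) ℚ)
    (hA : ∀ l h : Fin (m + 1 - i), A l h = bP p n l ((i : ℚ) + 2 * (h : ℕ)) i) :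
    A.det = (-(2 * (n : ℚ))) ^ ((m + 1 - i) * (m - i) / 2) ∧ A.det ≠ 0 := by
  have key : ∀ (M : ℕ) (B : Matrix (Fin M) (Fin M) ℚ),
      (∀ l h : Fin M, B l h = bP p n l ((i : ℚ) + 2 * ((h : ℕ) : ℚ)) i) →
      B.det = (-(2 * (n : ℚ))) ^ (∑ b : Fin M, (b : ℕ)) := by
    intro M B hB
    set x : Fin M → ℚ := fun h => (i : ℚ) + 2 * ((h : ℕ) : ℚ) with hx
    have hB' : B = (Matrix.of fun h l : Fin M =>
        (bPoly p n (i : ℚ) (l : ℕ)).eval (x h)).transpose := by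
      ext l h
      rw [Matrix.transpose_apply, Matrix.of_apply, bPoly_eval, hB]
    have hdeg : ∀ l : Fin M, (bPoly p n (i : ℚ) (l : ℕ)).natDegree ≤ (l : ℕ) :=
      fun l => le_of_eq (bPoly_natDegree p n hp hn _ _)
    have hdet : B.det = (Matrix.vandermonde x).det *
        (Matrix.of fun a b : Fin M => (bPoly p n (i : ℚ) (b : ℕ)).coeff a).det := by
      rw [hB', Matrix.det_transpose,
        Matrix.eval_matrixOfPolynomials_eq_vandermonde_mul_matrixOfPolynomials x _ hdeg,
        Matrix.det_mul]
    have hBT : (Matrix.of fun a b : Fin M =>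
        (bPoly p n (i : ℚ) (b : ℕ)).coeff a).BlockTriangular id := by
      intro a b hab
      show (bPoly p n (i : ℚ) (b : ℕ)).coeff a = 0
      apply Polynomial.coeff_eq_zero_of_natDegree_lt
      rw [bPoly_natDegree p n hp hn]
      exact_mod_cast hab
    have htri : (Matrix.of fun a b : Fin M =>
        (bPoly p n (i : ℚ) (b : ℕ)).coeff a).det =
        ∏ l : Fin M, ((-(n : ℚ)) ^ (l : ℕ) / (Nat.factorial (l : ℕ))) := by
      rw [Matrix.det_of_upperTriangular hBT]
      refine Finset.prod_congr rfl fun l _ => ?_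
      show (bPoly p n (i : ℚ) (l : ℕ)).coeff (l : ℕ) = _
      exact bPoly_coeff_top p n hp _ _
    have hvan : (Matrix.vandermonde x).det =
        ∏ b : Fin M, ((2 : ℚ) ^ (b : ℕ) * (Nat.factorial (b : ℕ) : ℚ)) := by
      rw [Matrix.det_vandermonde]
      have hswap : (∏ a : Fin M, ∏ b ∈ Finset.Ioi a, (x b - x a)) =
          ∏ b : Fin M, ∏ a ∈ Finset.Iio b, (x b - x a) :=
        Finset.prod_comm' (by simp)
      rw [hswap]
      refine Finset.prod_congr rfl fun b _ => ?_
      rw [← prod_Iio_fin b]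
      refine Finset.prod_congr rfl fun a _ => ?_
      simp only [hx]
      ring
    rw [hdet, htri, hvan, ← Finset.prod_mul_distrib, ← Finset.prod_pow_eq_pow_sum]
    refine Finset.prod_congr rfl fun b _ => ?_
    have hfac : ((Nat.factorial (b : ℕ) : ℚ)) ≠ 0 :=
      Nat.cast_ne_zero.mpr (Nat.factorial_pos _).ne'
    rw [show (-(2 * (n : ℚ))) = 2 * (-(n : ℚ)) from by ring, mul_pow]
    field_simp
  have hcomb := key (m + 1 - i) A hA
  have hexp : (∑ b : Fin (m + 1 - i), (b : ℕ)) = (m + 1 - i) * (m - i) / 2 := by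
    rw [Fin.sum_univ_eq_sum_range (fun j => j) (m + 1 - i), Finset.sum_range_id]
    have h1 : m + 1 - i - 1 = m - i := by omega
    rw [h1]
  have hne : (-(2 * (n : ℚ))) ≠ 0 := by
    simp only [neg_ne_zero, mul_ne_zero_iff, Nat.cast_ne_zero]
    exact ⟨two_ne_zero, hn.ne'⟩
  rw [hcomb, hexp]
  exact ⟨rfl, pow_ne_zero _ hne⟩
end
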